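/- For every list l with no duplicate elements over a linearly ordered type, every list in the support of rquick l is sorted in strictly increasing order and is a permutation of l (equivalently, has the same set of elements as l, with equal length). -/

import Mathlib

/-- Randomized quicksort: choose a pivot index uniformly at random, partition the
remaining elements into those smaller and those larger than the pivot, recursively
sort both parts and concatenate. -/
noncomputable def rquick {α : Type*} [LinearOrder α] : List α → PMF (List α)
  | [] => PMF.pure []
  | x :: xs =>
    haveI : Nonempty (Fin (x :: xs).length) := ⟨⟨0, by simp⟩⟩
    (PMF.uniformOfFintype (Fin (x :: xs).length)).bind fun i =>
      let p := (x :: xs).get i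
      let rest := (x :: xs).eraseIdx i
      (rquick (rest.filter fun y => decide (y < p))).bind fun sl =>
        (rquick (rest.filter fun y => decide (p < y))).map fun sr =>
          sl ++ p :: sr
  termination_by l => l.length
  decreasing_by
    all_goals
      calc (List.filter _ ((x :: xs).eraseIdx i)).length
          ≤ ((x :: xs).eraseIdx i).length := List.length_filter_le _ _
        _ < (x :: xs).length := by
            have := i.isLt
            rw [List.length_eraseIdx]
            split <;> simp_all

theorem rquick_correct_aux {α : Type*} [LinearOrder α] (n : ℕ) :
    ∀ (l : List α), l.length ≤ n → l.Nodup →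
    ∀ r ∈ (rquick l).support, r.Pairwise (· < ·) ∧ r.Perm l := by
  induction n with
  | zero =>
    intro l hn _ r hr
    have : l = [] := List.eq_nil_of_length_eq_zero (Nat.le_zero.mp hn)
    subst this
    rw [rquick] at hr
    simp at hr
    subst hr
    simp
  | succ n ih =>
    intro l hn hl r hr
    match l with
    | [] =>
      rw [rquick] at hr
      simp at hr
      subst hr
      simp
    | x :: xs =>
      rw [rquick] at hr
      simp only [PMF.support_bind, PMF.support_map, Set.mem_iUnion, Set.mem_image] at hr
      obtain ⟨i, -, sl, hsl, sr, hsr, rfl⟩ := hr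
      set p := (x :: xs).get i with hp
      set rest := (x :: xs).eraseIdx i with hrest
      have hrestsub : List.Sublist rest (x :: xs) := List.eraseIdx_sublist _ _
      have hrestnd : rest.Nodup := hl.sublist hrestsub
      have hlenrest : rest.length ≤ n := by
        have hlt : rest.length < (x :: xs).length := by
          have := i.isLt
          rw [hrest, List.length_eraseIdx]
          split <;> simp_all
        omega
      have hlen1 : (rest.filter fun y => decide (y < p)).length ≤ n :=
        le_trans (List.length_filter_le _ _) hlenrest
      have hlen2 : (rest.filter fun y => decide (p < y)).length ≤ n :=
        le_trans (List.length_filter_le _ _) hlenrest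
      have hperm : (x :: xs).Perm (p :: rest) := by
        rw [hrest, ← hl.erase_get i]
        exact List.perm_cons_erase (List.get_mem _ i)
      have hpnotin : p ∉ rest := List.Nodup.notMem (hperm.nodup_iff.mp hl)
      have hsm := ih _ hlen1 (hrestnd.filter _) _ hsl
      have hbg := ih _ hlen2 (hrestnd.filter _) _ hsr
      have hslmem : ∀ y ∈ sl, y < p := by
        intro y hy
        have := hsm.2.mem_iff.mp hy
        simpa using (List.of_mem_filter this)
      have hsrmem : ∀ y ∈ sr, p < y := by
        intro y hy
        have := hbg.2.mem_iff.mp hy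
        simpa using (List.of_mem_filter this)
      constructor
      · rw [List.pairwise_append]
        refine ⟨hsm.1, ?_, ?_⟩
        · rw [List.pairwise_cons]
          exact ⟨hsrmem, hbg.1⟩
        · intro a ha b hb
          rcases List.mem_cons.mp hb with rfl | hb
          · exact hslmem a ha
          · exact (hslmem a ha).trans (hsrmem b hb)
      · refine List.Perm.trans ?_ hperm.symm
        have hfilt : List.Perm ((rest.filter fun y => decide (y < p)) ++
            (rest.filter fun y => decide (p < y))) rest := by
          refine List.Perm.trans ?_ (List.filter_append_perm (fun y => decide (y < p)) rest)
          refine List.Perm.append_left _ ?_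
          rw [List.filter_congr]
          intro y hy
          have hne : y ≠ p := fun h => hpnotin (h ▸ hy)
          rcases hne.lt_or_gt with h | h <;> simp [h, asymm h]
        exact List.Perm.trans (List.perm_cons_append_cons p (List.Perm.refl _)).symm
          (List.Perm.cons p ((List.Perm.append hsm.2 hbg.2).trans hfilt))

theorem rquick_correct {α : Type*} [LinearOrder α] (l : List α) (hl : l.Nodup)
    (r : List α) (hr : r ∈ (rquick l).support) :
    r.Pairwise (· < ·) ∧ r.Perm l :=
  rquick_correct_aux l.length l le_rfl hl r hr
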